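/- (Fisher consistency, integrated form of Lemma 1.) Let K ≥ 1 be an integer, (X, Σ_X, μ) a measure space, and W : X × {−1,1}^K → ℝ such that x ↦ W(x,a) is measurable and integrable for each a ∈ {−1,1}^K. Then for every measurable f : X → ℝ^K such that x ↦ Σ_a W(x,a) ψ(a ⊙ f(x)) is integrable, ∫ Σ_{a ∈ {−1,1}^K} W(x,a) ψ(a ⊙ f(x)) dμ(x) ≥ ∫ (Σ_{a} W(x,a) − max(0, max_{a} W(x,a))) dμ(x). Moreover, if for μ-a.e. x the function a ↦ W(x,a) attains its maximum at a unique point a₀(x) and W(x, a₀(x)) > 0, then equality holds if and only if for μ-a.e. x, a₀(x)_k f(x)_k ≥ 1 for all k = 1, …, K; in particular any minimizer f of the ψ-risk satisfies sign(f(x)) = a₀(x) μ-a.e. -/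

import Mathlib

/-- `Tgen s z = max (s - z 1, ..., s - z K, 0)`, the function `T_s` from the paper. -/
noncomputable def Tgen {K : ℕ} (s : ℝ) (z : Fin K → ℝ) : ℝ :=
  Finset.fold (· ⊔ ·) 0 (fun k => s - z k) Finset.univ

/-- The generalized ψ-loss: `ψ z = T₁ z - T₀ z`. -/
noncomputable def psiLoss {K : ℕ} (z : Fin K → ℝ) : ℝ :=
  Tgen 1 z - Tgen 0 z

open scoped Classical in
/-- The set of sign vectors `{-1, 1}^K`, as a finset of `Fin K → ℝ`. -/
noncomputable def signVecs (K : ℕ) : Finset (Fin K → ℝ) :=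
  Finset.image (fun (b : Fin K → Bool) (k : Fin K) => if b k then (1 : ℝ) else -1)
    Finset.univ

lemma mem_signVecs {K : ℕ} (a : Fin K → ℝ) :
    a ∈ signVecs K ↔ ∀ k, a k = 1 ∨ a k = -1 := by
  classical
  unfold signVecs
  constructor
  · intro h k
    rw [Finset.mem_image] at h
    obtain ⟨b, -, rfl⟩ := h
    by_cases hb : b k <;> simp [hb]
  · intro h
    rw [Finset.mem_image]
    refine ⟨fun k => decide (a k = 1), Finset.mem_univ _, ?_⟩
    funext k
    rcases h k with h1 | h1 <;> norm_num [h1]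

lemma signVecs_nonempty (K : ℕ) : (signVecs K).Nonempty :=
  ⟨fun _ => 1, (mem_signVecs _).mpr fun _ => Or.inl rfl⟩

/- ### Auxiliary lemmas -/

lemma Tgen_le_iff {K : ℕ} {s c : ℝ} {z : Fin K → ℝ} :
    Tgen s z ≤ c ↔ 0 ≤ c ∧ ∀ k, s - z k ≤ c := by
  have h := Finset.fold_max_le (b := (0:ℝ)) (f := fun k => s - z k)
    (s := (Finset.univ : Finset (Fin K))) c
  exact h.trans (by simp [and_comm])

lemma Tgen_nonneg {K : ℕ} {s : ℝ} {z : Fin K → ℝ} : 0 ≤ Tgen s z :=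
  (Tgen_le_iff.mp le_rfl).1

lemma le_Tgen {K : ℕ} {s : ℝ} {z : Fin K → ℝ} (k : Fin K) : s - z k ≤ Tgen s z :=
  (Tgen_le_iff.mp le_rfl).2 k

lemma psi_nonneg {K : ℕ} (z : Fin K → ℝ) : 0 ≤ psiLoss z := by
  have h : Tgen 0 z ≤ Tgen 1 z := by
    rw [Tgen_le_iff]
    exact ⟨Tgen_nonneg, fun k => le_trans (by linarith [le_Tgen (s := (1:ℝ)) (z := z) k])
      le_rfl⟩
  simpa [psiLoss] using h

lemma psi_le_one {K : ℕ} (z : Fin K → ℝ) : psiLoss z ≤ 1 := by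
  have h : Tgen 1 z ≤ 1 + Tgen 0 z := by
    rw [Tgen_le_iff]
    constructor
    · linarith [Tgen_nonneg (s := (0:ℝ)) (z := z)]
    · intro k
      have := le_Tgen (s := (0:ℝ)) (z := z) k
      linarith
  simp only [psiLoss]
  linarith

lemma psi_eq_zero_iff {K : ℕ} (z : Fin K → ℝ) :
    psiLoss z = 0 ↔ ∀ k, 1 ≤ z k := by
  constructor
  · intro h k
    by_contra hk
    push_neg at hk
    -- Tgen 1 z = Tgen 0 z, but Tgen 1 z ≥ 1 - z k > max(0 - z j)?
    have heq : Tgen 1 z = Tgen 0 z := by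
      have := h; simp only [psiLoss] at this; linarith
    -- Tgen 0 z < Tgen 1 z : show Tgen 0 z ≤ Tgen 1 z - (1 - ...)? Use:
    -- Tgen 1 z ≥ 1 - z k. Also Tgen 0 z = Tgen 1 z. Consider c := Tgen 1 z.
    -- From Tgen 0 z ≤ c we get nothing; instead show Tgen 0 z < Tgen 1 z.
    have h1 : 1 - z k ≤ Tgen 1 z := le_Tgen k
    -- show Tgen 0 z ≤ Tgen 1 z - min (1 - z k) ... easier: Tgen 0 z ≤ max (Tgen 1 z - 1) 0? no.
    -- ∀ j, 0 - z j = (1 - z j) - 1 ≤ Tgen 1 z - 1.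
    have h2 : Tgen 0 z ≤ max 0 (Tgen 1 z - 1) := by
      rw [Tgen_le_iff]
      refine ⟨le_max_left _ _, fun j => le_trans ?_ (le_max_right _ _)⟩
      have := le_Tgen (s := (1:ℝ)) (z := z) j
      linarith
    have hpos : 0 < Tgen 1 z := lt_of_lt_of_le (by linarith) h1
    rcases le_or_gt (Tgen 1 z) 1 with hc | hc
    · have : Tgen 0 z ≤ 0 := by
        rw [max_eq_left (by linarith)] at h2; exact h2
      linarith [heq ▸ this]
    · have : Tgen 0 z ≤ Tgen 1 z - 1 := by
        rw [max_eq_right (by linarith)] at h2; exact h2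
      rw [heq] at this; linarith
  · intro h
    have h1 : Tgen 1 z ≤ 0 := by
      rw [Tgen_le_iff]
      exact ⟨le_rfl, fun k => by linarith [h k]⟩
    have h0 : Tgen 0 z ≤ 0 := by
      rw [Tgen_le_iff]
      exact ⟨le_rfl, fun k => by linarith [h k]⟩
    have := Tgen_nonneg (s := (1:ℝ)) (z := z)
    have := Tgen_nonneg (s := (0:ℝ)) (z := z)
    simp only [psiLoss]
    linarith

lemma psi_eq_one {K : ℕ} (z : Fin K → ℝ) (k : Fin K) (hk : z k ≤ 0) :
    psiLoss z = 1 := by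
  -- here min z ≤ 0 so Tgen 1 z = 1 + Tgen 0 z
  have h1 : 1 + Tgen 0 z ≤ Tgen 1 z := by
    -- 1 + Tgen 0 z = 1 + max over (0 - z j); need: ∀ bound c of Tgen 1 z, 1 + Tgen 0 z ≤ c
    -- use Tgen_le_iff on Tgen 0 z ≤ Tgen 1 z - 1
    have h2 : Tgen 0 z ≤ Tgen 1 z - 1 := by
      rw [Tgen_le_iff]
      constructor
      · have := le_Tgen (s := (1:ℝ)) (z := z) k; linarith
      · intro j
        have := le_Tgen (s := (1:ℝ)) (z := z) j; linarith
    linarith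
  have := psi_le_one z
  simp only [psiLoss] at this ⊢
  linarith

lemma psi_lt_one {K : ℕ} (z : Fin K → ℝ) (h : psiLoss z < 1) : ∀ k, 0 < z k := by
  intro k
  by_contra hk
  push_neg at hk
  rw [psi_eq_one z k hk] at h
  exact lt_irrefl _ h

/-- At most one sign vector has all coordinates of positive product with `z`. -/
lemma signVecs_uniq {K : ℕ} {a b : Fin K → ℝ} (ha : a ∈ signVecs K)
    (hb : b ∈ signVecs K) {z : Fin K → ℝ}
    (hpa : ∀ k, 0 < a k * z k) (hpb : ∀ k, 0 < b k * z k) : a = b := by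
  funext k
  have h1' := hpa k
  have h2' := hpb k
  rcases (mem_signVecs a).mp ha k with h1 | h1 <;>
    rcases (mem_signVecs b).mp hb k with h2 | h2 <;>
      rw [h1] at h1' ⊢ <;> rw [h2] at h2' ⊢ <;> linarith

/-- Core pointwise inequality, rearranged: `∑ w a * (1 - ψ(a⊙z)) ≤ max 0 (sup' w)`. -/
lemma key_sum_le {K : ℕ} (hK : 1 ≤ K) (w : (Fin K → ℝ) → ℝ) (z : Fin K → ℝ) :
    ∑ a ∈ signVecs K, w a * (1 - psiLoss (fun k => a k * z k))
      ≤ max 0 ((signVecs K).sup' (signVecs_nonempty K) w) := by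
  set φ : (Fin K → ℝ) → ℝ := fun a => 1 - psiLoss (fun k => a k * z k) with hφ
  have hφ0 : ∀ a, 0 ≤ φ a := fun a => by
    have := psi_le_one (fun k => a k * z k); simp [hφ]; linarith
  have hφ1 : ∀ a, φ a ≤ 1 := fun a => by
    have := psi_nonneg (fun k => a k * z k); simp [hφ]; linarith
  have huniq : ∀ a ∈ signVecs K, ∀ b ∈ signVecs K, 0 < φ a → 0 < φ b → a = b := by
    intro a ha b hb hpa hpb
    have h1 : ∀ k, 0 < a k * z k :=
      psi_lt_one _ (by simp only [hφ] at hpa; linarith)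
    have h2 : ∀ k, 0 < b k * z k :=
      psi_lt_one _ (by simp only [hφ] at hpb; linarith)
    exact signVecs_uniq ha hb h1 h2
  by_cases hex : ∃ a ∈ signVecs K, 0 < φ a
  · obtain ⟨a₁, ha₁, hpos⟩ := hex
    rw [Finset.sum_eq_single_of_mem a₁ ha₁ (fun b hb hne => by
      have : φ b = 0 := by
        rcases lt_or_eq_of_le (hφ0 b) with h | h
        · exact absurd (huniq b hb a₁ ha₁ h hpos) hne
        · exact h.symm
      show w b * φ b = 0
      rw [this, mul_zero])]
    rcases le_or_gt (w a₁) 0 with hw | hw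
    · exact le_trans (mul_nonpos_of_nonpos_of_nonneg hw (hφ0 a₁)) (le_max_left _ _)
    · calc w a₁ * φ a₁ ≤ w a₁ := mul_le_of_le_one_right hw.le (hφ1 a₁)
        _ ≤ (signVecs K).sup' (signVecs_nonempty K) w := Finset.le_sup' w ha₁
        _ ≤ _ := le_max_right _ _
  · push_neg at hex
    have : ∀ a ∈ signVecs K, w a * φ a = 0 := fun a ha => by
      rw [le_antisymm (hex a ha) (hφ0 a), mul_zero]
    rw [Finset.sum_eq_zero this]
    exact le_max_left _ _

lemma key_le {K : ℕ} (hK : 1 ≤ K) (w : (Fin K → ℝ) → ℝ) (z : Fin K → ℝ) :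
    (∑ a ∈ signVecs K, w a) - max 0 ((signVecs K).sup' (signVecs_nonempty K) w)
      ≤ ∑ a ∈ signVecs K, w a * psiLoss (fun k => a k * z k) := by
  have h := key_sum_le hK w z
  have hsplit : ∑ a ∈ signVecs K, w a * (1 - psiLoss (fun k => a k * z k))
      = (∑ a ∈ signVecs K, w a)
        - ∑ a ∈ signVecs K, w a * psiLoss (fun k => a k * z k) := by
    rw [← Finset.sum_sub_distrib]
    congr 1; funext a; ring
  linarith [hsplit ▸ h]

lemma sup'_eq_of_max {K : ℕ} (w : (Fin K → ℝ) → ℝ) {a₀ : Fin K → ℝ}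
    (ha₀ : a₀ ∈ signVecs K)
    (hmax : ∀ a ∈ signVecs K, a ≠ a₀ → w a < w a₀) :
    (signVecs K).sup' (signVecs_nonempty K) w = w a₀ := by
  refine le_antisymm (Finset.sup'_le _ _ fun a ha => ?_) (Finset.le_sup' w ha₀)
  by_cases h : a = a₀
  · rw [h]
  · exact (hmax a ha h).le

lemma key_eq_iff {K : ℕ} (hK : 1 ≤ K) (w : (Fin K → ℝ) → ℝ) (z : Fin K → ℝ)
    {a₀ : Fin K → ℝ} (ha₀ : a₀ ∈ signVecs K)
    (hmax : ∀ a ∈ signVecs K, a ≠ a₀ → w a < w a₀) (hpos : 0 < w a₀) :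
    (∑ a ∈ signVecs K, w a * psiLoss (fun k => a k * z k)
      = (∑ a ∈ signVecs K, w a)
          - max 0 ((signVecs K).sup' (signVecs_nonempty K) w))
    ↔ ∀ k, 1 ≤ a₀ k * z k := by
  have hsup : (signVecs K).sup' (signVecs_nonempty K) w = w a₀ :=
    sup'_eq_of_max w ha₀ hmax
  have hmx : max 0 ((signVecs K).sup' (signVecs_nonempty K) w) = w a₀ := by
    rw [hsup]; exact max_eq_right hpos.le
  have hsplit : ∑ a ∈ signVecs K, w a * (1 - psiLoss (fun k => a k * z k))
      = (∑ a ∈ signVecs K, w a)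
        - ∑ a ∈ signVecs K, w a * psiLoss (fun k => a k * z k) := by
    rw [← Finset.sum_sub_distrib]
    congr 1; funext a; ring
  rw [hmx]
  constructor
  · intro heq
    have hsum : ∑ a ∈ signVecs K, w a * (1 - psiLoss (fun k => a k * z k)) = w a₀ := by
      rw [hsplit, heq]; ring
    set φ : (Fin K → ℝ) → ℝ := fun a => 1 - psiLoss (fun k => a k * z k) with hφ
    have hφ0 : ∀ a, 0 ≤ φ a := fun a => by
      have := psi_le_one (fun k => a k * z k); simp [hφ]; linarith
    have hφ1 : ∀ a, φ a ≤ 1 := fun a => by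
      have := psi_nonneg (fun k => a k * z k); simp [hφ]; linarith
    by_cases hex : ∃ a ∈ signVecs K, 0 < φ a
    · obtain ⟨a₁, ha₁, hp⟩ := hex
      have huniq : ∀ b ∈ signVecs K, b ≠ a₁ → w b * φ b = 0 := by
        intro b hb hne
        rcases lt_or_eq_of_le (hφ0 b) with h | h
        · exfalso
          apply hne
          exact signVecs_uniq hb ha₁
            (psi_lt_one _ (by simp only [hφ] at h; linarith))
            (psi_lt_one _ (by simp only [hφ] at hp; linarith))
        · show w b * φ b = 0
          rw [← h, mul_zero]
      rw [Finset.sum_eq_single_of_mem a₁ ha₁ huniq] at hsum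
      have hw1 : 0 < w a₁ := by
        by_contra hw
        push_neg at hw
        have := mul_nonpos_of_nonpos_of_nonneg hw (hφ0 a₁)
        linarith
      have hle : w a₀ ≤ w a₁ := by
        calc w a₀ = w a₁ * φ a₁ := hsum.symm
          _ ≤ w a₁ := mul_le_of_le_one_right hw1.le (hφ1 a₁)
      have ha₁eq : a₁ = a₀ := by
        by_contra hne
        exact absurd hle (not_le.mpr (hmax a₁ ha₁ hne))
      rw [ha₁eq] at hsum
      have hφone : φ a₀ = 1 := by
        have : w a₀ * φ a₀ = w a₀ * 1 := by rw [mul_one]; exact hsum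
        exact mul_left_cancel₀ (ne_of_gt hpos) this
      have : psiLoss (fun k => a₀ k * z k) = 0 := by
        simp only [hφ] at hφone; linarith
      exact (psi_eq_zero_iff _).mp this
    · push_neg at hex
      exfalso
      have : ∑ a ∈ signVecs K, w a * φ a = 0 :=
        Finset.sum_eq_zero fun a ha => by
          rw [le_antisymm (hex a ha) (hφ0 a), mul_zero]
      rw [this] at hsum
      linarith
  · intro h
    have hψ0 : psiLoss (fun k => a₀ k * z k) = 0 := (psi_eq_zero_iff _).mpr h
    have hsum : ∑ a ∈ signVecs K, w a * (1 - psiLoss (fun k => a k * z k)) = w a₀ := by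
      rw [Finset.sum_eq_single_of_mem a₀ ha₀ (fun b hb hne => ?_), hψ0]
      · ring
      · -- b ≠ a₀ : ψ(b⊙z) = 1
        obtain ⟨k, hk⟩ : ∃ k, b k ≠ a₀ k := by
          by_contra hc
          push_neg at hc
          exact hne (funext hc)
        have hbk : b k = -a₀ k := by
          rcases (mem_signVecs b).mp hb k with h1 | h1 <;>
            rcases (mem_signVecs a₀).mp ha₀ k with h2 | h2 <;>
            simp_all
        have : b k * z k ≤ 0 := by
          have := h k
          rw [hbk]
          nlinarith
        rw [psi_eq_one _ k this]
        ring
    rw [hsplit] at hsum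
    linarith

open MeasureTheory in
theorem stmt16 (K : ℕ) (hK : 1 ≤ K) {X : Type*} [MeasurableSpace X]
    (μ : Measure X) (W : X → (Fin K → ℝ) → ℝ)
    (hWmeas : ∀ a ∈ signVecs K, Measurable fun x => W x a)
    (hWint : ∀ a ∈ signVecs K, Integrable (fun x => W x a) μ)
    (f : X → Fin K → ℝ) (hf : Measurable f)
    (hint : Integrable
      (fun x => ∑ a ∈ signVecs K, W x a * psiLoss (fun k => a k * f x k)) μ) :
    -- the ψ-risk is bounded below by the Bayes ψ-risk
    (∫ x, ((∑ a ∈ signVecs K, W x a)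
          - max 0 ((signVecs K).sup' (signVecs_nonempty K) (fun a => W x a))) ∂μ)
      ≤ (∫ x, (∑ a ∈ signVecs K, W x a * psiLoss (fun k => a k * f x k)) ∂μ)
    ∧
    -- if a.e. the weight has a unique, strictly positive maximizer `a₀ x`, then …
    ∀ a₀ : X → Fin K → ℝ,
      (∀ᵐ x ∂μ, a₀ x ∈ signVecs K
          ∧ (∀ a ∈ signVecs K, a ≠ a₀ x → W x a < W x (a₀ x))
          ∧ 0 < W x (a₀ x)) →
      -- … equality holds iff a.e. `a₀ x k * f x k ≥ 1` for all `k` …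
      (((∫ x, (∑ a ∈ signVecs K, W x a * psiLoss (fun k => a k * f x k)) ∂μ)
          = (∫ x, ((∑ a ∈ signVecs K, W x a)
              - max 0 ((signVecs K).sup' (signVecs_nonempty K) (fun a => W x a))) ∂μ))
        ↔ (∀ᵐ x ∂μ, ∀ k, 1 ≤ a₀ x k * f x k))
      ∧
      -- … and any minimizer `f` of the ψ-risk satisfies `sign (f x) = a₀ x` a.e.
      (Measurable a₀ →
        (∀ g : X → Fin K → ℝ, Measurable g →
          Integrable
            (fun x => ∑ a ∈ signVecs K, W x a * psiLoss (fun k => a k * g x k)) μ →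
          (∫ x, (∑ a ∈ signVecs K, W x a * psiLoss (fun k => a k * f x k)) ∂μ)
            ≤ ∫ x, (∑ a ∈ signVecs K, W x a * psiLoss (fun k => a k * g x k)) ∂μ) →
        ∀ᵐ x ∂μ, ∀ k, Real.sign (f x k) = a₀ x k) := by
  classical
  set S := signVecs K with hS
  set L : X → ℝ := fun x => (∑ a ∈ S, W x a)
      - max 0 (S.sup' (signVecs_nonempty K) (fun a => W x a)) with hL
  -- measurability and integrability of L
  have hsum_meas : Measurable (fun x => ∑ a ∈ S, W x a) :=
    Finset.measurable_sum S (fun a ha => hWmeas a ha)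
  have hsup_meas : Measurable (fun x => S.sup' (signVecs_nonempty K) (fun a => W x a)) := by
    have h := Finset.measurable_sup' (signVecs_nonempty K) (f := fun a x => W x a)
      (fun a ha => hWmeas a ha)
    have he : (fun x => S.sup' (signVecs_nonempty K) (fun a => W x a))
        = (signVecs K).sup' (signVecs_nonempty K) (fun a x => W x a) := by
      funext x
      simp [Finset.sup'_apply]
      rfl
    rw [he]
    exact h
  have hLmeas : Measurable L := hsum_meas.sub (measurable_const.max hsup_meas)
  have habs_int : Integrable (fun x => ∑ a ∈ S, |W x a|) μ :=
    integrable_finset_sum S (fun a ha => (hWint a ha).abs)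
  have hmax_int : Integrable
      (fun x => max 0 (S.sup' (signVecs_nonempty K) (fun a => W x a))) μ := by
    refine Integrable.mono' habs_int
      ((measurable_const.max hsup_meas).aestronglyMeasurable)
      (Filter.Eventually.of_forall fun x => ?_)
    have h1 : (0:ℝ) ≤ max 0 (S.sup' (signVecs_nonempty K) (fun a => W x a)) :=
      le_max_left _ _
    rw [Real.norm_eq_abs, abs_of_nonneg h1]
    refine max_le (Finset.sum_nonneg fun a _ => abs_nonneg _) ?_
    refine Finset.sup'_le _ _ fun a ha => ?_
    calc W x a ≤ |W x a| := le_abs_self _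
      _ ≤ ∑ b ∈ S, |W x b| :=
          Finset.single_le_sum (f := fun b => |W x b|) (fun b _ => abs_nonneg _) ha
  have hLint : Integrable L μ :=
    (integrable_finset_sum S (fun a ha => hWint a ha)).sub hmax_int
  -- pointwise lower bound
  have hpt : ∀ x, L x ≤ ∑ a ∈ S, W x a * psiLoss (fun k => a k * f x k) :=
    fun x => key_le hK (W x) (f x)
  have hpart1 : (∫ x, L x ∂μ)
      ≤ ∫ x, (∑ a ∈ S, W x a * psiLoss (fun k => a k * f x k)) ∂μ :=
    integral_mono hLint hint hpt
  refine ⟨hpart1, ?_⟩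
  intro a₀ ha₀
  have hiff : ((∫ x, (∑ a ∈ S, W x a * psiLoss (fun k => a k * f x k)) ∂μ)
        = ∫ x, L x ∂μ)
      ↔ ∀ᵐ x ∂μ, ∀ k, 1 ≤ a₀ x k * f x k := by
    constructor
    · intro heq
      have hD : Integrable
          (fun x => (∑ a ∈ S, W x a * psiLoss (fun k => a k * f x k)) - L x) μ :=
        hint.sub hLint
      have hz : ∫ x, ((∑ a ∈ S, W x a * psiLoss (fun k => a k * f x k)) - L x) ∂μ
          = 0 := by
        rw [integral_sub hint hLint, heq, sub_self]
      have hDz := (integral_eq_zero_iff_of_nonneg_ae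
        (Filter.Eventually.of_forall fun x => sub_nonneg.mpr (hpt x)) hD).mp hz
      rw [Filter.EventuallyEq] at hDz
      filter_upwards [hDz, ha₀] with x hx hx2
      obtain ⟨hmem, hmax, hpos⟩ := hx2
      have hEqx : ∑ a ∈ S, W x a * psiLoss (fun k => a k * f x k) = L x := by
        have : (∑ a ∈ S, W x a * psiLoss (fun k => a k * f x k)) - L x = 0 := hx
        linarith
      exact (key_eq_iff hK (W x) (f x) hmem hmax hpos).mp hEqx
    · intro hae
      refine integral_congr_ae ?_
      filter_upwards [hae, ha₀] with x hx hx2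
      obtain ⟨hmem, hmax, hpos⟩ := hx2
      exact (key_eq_iff hK (W x) (f x) hmem hmax hpos).mpr hx
  refine ⟨hiff, ?_⟩
  intro hmeas_a₀ hmin
  -- the candidate g := a₀ achieves the lower bound a.e.
  have hgL : (fun x => ∑ a ∈ S, W x a * psiLoss (fun k => a k * a₀ x k)) =ᵐ[μ] L := by
    filter_upwards [ha₀] with x hx2
    obtain ⟨hmem, hmax, hpos⟩ := hx2
    refine (key_eq_iff hK (W x) (a₀ x) hmem hmax hpos).mpr fun k => ?_
    rcases (mem_signVecs (a₀ x)).mp hmem k with h1 | h1 <;> rw [h1] <;> norm_num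
  have hgInt : Integrable
      (fun x => ∑ a ∈ S, W x a * psiLoss (fun k => a k * a₀ x k)) μ :=
    hLint.congr hgL.symm
  have hgEq : ∫ x, (∑ a ∈ S, W x a * psiLoss (fun k => a k * a₀ x k)) ∂μ
      = ∫ x, L x ∂μ := integral_congr_ae hgL
  have hle := hmin a₀ hmeas_a₀ hgInt
  rw [hgEq] at hle
  have hEqInt : (∫ x, (∑ a ∈ S, W x a * psiLoss (fun k => a k * f x k)) ∂μ)
      = ∫ x, L x ∂μ := le_antisymm hle hpart1
  have hfin := hiff.mp hEqInt
  filter_upwards [hfin, ha₀] with x hx hx2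
  obtain ⟨hmem, -, -⟩ := hx2
  intro k
  rcases (mem_signVecs (a₀ x)).mp hmem k with h1 | h1
  · rw [h1]
    have := hx k
    rw [h1, one_mul] at this
    exact Real.sign_of_pos (by linarith)
  · rw [h1]
    have := hx k
    rw [h1] at this
    have hneg : f x k < 0 := by nlinarith
    exact Real.sign_of_neg hneg
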